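/- Let (X,r) be a square-free solution of the YBE (non-degenerate, involutive, square-free). If L_x and L_y are both automorphisms of the solution (X,r), then L_x ∘ L_y = L_y ∘ L_x. Consequently the intersection Aut(X,r) ∩ G(X,r) is an abelian subgroup of G(X,r). -/

import Mathlib

namespace YBPaper

variable {X : Type*}

/-- Left translation: `lact r x y = ˣy`. -/
def lact (r : X × X → X × X) (x y : X) : X := (r (x, y)).1

/-- Right translation: `ract r x y = xʸ`. -/
def ract (r : X × X → X × X) (x y : X) : X := (r (x, y)).2

def r12 (r : X × X → X × X) : X × X × X → X × X × X :=
  fun p => ((r (p.1, p.2.1)).1, (r (p.1, p.2.1)).2, p.2.2)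

def r23 (r : X × X → X × X) : X × X × X → X × X × X :=
  fun p => (p.1, r (p.2.1, p.2.2))

/-- A non-degenerate involutive square-free set-theoretic solution of the YBE. -/
structure IsSquareFreeSolution (r : X × X → X × X) : Prop where
  nondegL : ∀ x : X, Function.Bijective fun y => (r (x, y)).1
  nondegR : ∀ y : X, Function.Bijective fun x => (r (x, y)).2
  invol : ∀ p : X × X, r (r p) = p
  sqfree : ∀ x : X, r (x, x) = (x, x)
  braided : ∀ p : X × X × X, r12 r (r23 r (r12 r p)) = r23 r (r12 r (r23 r p))

/-- `relk l k x y` means the images of `x` and `y` in the `k`-th retract coincide. -/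
def relk (l : X → X → X) : ℕ → X → X → Prop
  | 0 => fun x y => x = y
  | (k+1) => fun x y => ∀ z : X, relk l k (l x z) (l y z)

/-- `mplLe l m` : the `m`-th retract is a one-element solution, i.e. `mpl ≤ m`. -/
def mplLe (l : X → X → X) (m : ℕ) : Prop := ∀ x y : X, relk l m x y

/-- `mplEq l m` : the multipermutation level is exactly `m`. -/
def mplEq (l : X → X → X) (m : ℕ) : Prop := mplLe l m ∧ ∀ k < m, ¬ mplLe l k

/-- The set of left translations, as permutations. -/
def lperms (r : X × X → X × X) : Set (Equiv.Perm X) :=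
  {σ : Equiv.Perm X | ∃ x : X, ∀ y : X, σ y = (r (x, y)).1}

/-- The YB permutation group `𝒢(X,r)`, generated by the left translations. -/
def Gcal (r : X × X → X × X) : Subgroup (Equiv.Perm X) := Subgroup.closure (lperms r)


/-- `L_x` is an automorphism of the solution (pointwise formulation via lri). -/
def IsAutPt (r : X × X → X × X) (x : X) : Prop :=
  ∀ a b : X, lact r x (lact r a b) = lact r (lact r x a) (lact r x b)

/-- `σ` is an automorphism of the solution `(X,r)`. -/
def IsAutPerm (r : X × X → X × X) (σ : Equiv.Perm X) : Prop :=
  ∀ p : X × X, r (σ p.1, σ p.2) = (σ (r p).1, σ (r p).2)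

section Aux

open Classical in
noncomputable def ee (z : X) : X → ℤ := fun t => if t = z then 1 else 0

@[simp] lemma ee_self (z : X) : ee z z = 1 := by simp [ee]

def tw (d : Equiv.Perm X) (f : X → ℤ) : X → ℤ := fun t => f (d.symm t)

lemma tw_one (f : X → ℤ) : tw (1 : Equiv.Perm X) f = f := rfl
lemma tw_mul (d e : Equiv.Perm X) (f : X → ℤ) : tw (d * e) f = tw d (tw e f) := rfl
lemma tw_add (d : Equiv.Perm X) (f g : X → ℤ) : tw d (f + g) = tw d f + tw d g := rfl
lemma tw_neg (d : Equiv.Perm X) (f : X → ℤ) : tw d (-f) = -(tw d f) := rfl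
lemma tw_zero (d : Equiv.Perm X) : tw d (0 : X → ℤ) = 0 := rfl
lemma tw_apply (d : Equiv.Perm X) (f : X → ℤ) (t : X) : tw d f t = f (d.symm t) := rfl

lemma tw_ee (d : Equiv.Perm X) (z : X) : tw d (ee z) = ee (d z) := by
  funext t
  simp only [tw, ee]
  by_cases hh : d.symm t = z
  · rw [if_pos hh, if_pos (by rw [← hh]; simp)]
  · rw [if_neg hh, if_neg (by intro hc; exact hh (by rw [hc]; simp))]

lemma tw_inv_tw (d : Equiv.Perm X) (f : X → ℤ) : tw d (tw d⁻¹ f) = f := by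
  rw [← tw_mul]; simp [tw_one]
lemma tw_tw_inv (d : Equiv.Perm X) (f : X → ℤ) : tw d⁻¹ (tw d f) = f := by
  rw [← tw_mul]; simp [tw_one]

@[ext] structure Wr (X : Type*) where
  v : X → ℤ
  p : Equiv.Perm X

namespace Wr

instance : Group (Wr X) where
  mul a b := ⟨a.v + tw a.p b.v, a.p * b.p⟩
  one := ⟨0, 1⟩
  inv a := ⟨-(tw a.p⁻¹ a.v), a.p⁻¹⟩
  mul_assoc a b c := by
    refine Wr.ext ?_ (mul_assoc _ _ _)
    show (a.v + tw a.p b.v) + tw (a.p * b.p) c.v = a.v + tw a.p (b.v + tw b.p c.v)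
    rw [tw_mul, tw_add]; abel
  one_mul a := by
    refine Wr.ext ?_ (one_mul _)
    show (0 : X → ℤ) + tw 1 a.v = a.v
    rw [tw_one]; abel
  mul_one a := by
    refine Wr.ext ?_ (mul_one _)
    show a.v + tw a.p 0 = a.v
    rw [tw_zero]; abel
  inv_mul_cancel a := by
    refine Wr.ext ?_ (inv_mul_cancel _)
    show -(tw a.p⁻¹ a.v) + tw a.p⁻¹ a.v = 0
    abel

@[simp] lemma mul_v (a b : Wr X) : (a * b).v = a.v + tw a.p b.v := rfl
@[simp] lemma mul_p (a b : Wr X) : (a * b).p = a.p * b.p := rfl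
@[simp] lemma inv_v (a : Wr X) : (a⁻¹).v = -(tw a.p⁻¹ a.v) := rfl
@[simp] lemma inv_p (a : Wr X) : (a⁻¹).p = a.p⁻¹ := rfl
@[simp] lemma one_v : (1 : Wr X).v = 0 := rfl
@[simp] lemma one_p : (1 : Wr X).p = 1 := rfl

end Wr

variable {r : X × X → X × X} (h : IsSquareFreeSolution r)

include h

lemma inv1 (x y : X) : lact r (lact r x y) (ract r x y) = x :=
  congrArg Prod.fst (h.invol (x, y))

lemma inv2 (x y : X) : ract r (lact r x y) (ract r x y) = y :=
  congrArg Prod.snd (h.invol (x, y))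

lemma ybeL (x y z : X) :
    lact r (lact r x y) (lact r (ract r x y) z) = lact r x (lact r y z) := by
  have := congrArg (fun p => p.1) (h.braided (x, y, z))
  simpa [r12, r23, lact, ract] using this

noncomputable def Lq (x : X) : Equiv.Perm X := Equiv.ofBijective _ (h.nondegL x)
noncomputable def Rq (x : X) : Equiv.Perm X := Equiv.ofBijective _ (h.nondegR x)

@[simp] lemma Lq_apply (x y : X) : Lq h x y = lact r x y := rfl

lemma Rq_symm (x b : X) : ract r ((Rq h x).symm b) x = b :=
  Equiv.apply_symm_apply (Rq h x) b

/-- The basic positive letter. -/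
noncomputable def gp (z : X) : Wr X := ⟨ee z, Lq h z⟩

@[simp] lemma gp_v (z : X) : (gp h z).v = ee z := rfl
@[simp] lemma gp_p (z : X) : (gp h z).p = Lq h z := rfl

lemma Lq_mul (x y : X) :
    Lq h x * Lq h y = Lq h (lact r x y) * Lq h (ract r x y) := by
  ext t
  simp [Equiv.Perm.mul_apply, ybeL h]

/-- The fundamental quadratic relation, on the level of `Wr`. -/
lemma movePP (x y : X) :
    gp h x * gp h y = gp h (lact r x y) * gp h (ract r x y) := by
  refine Wr.ext ?_ (Lq_mul h x y)
  show ee x + tw (Lq h x) (ee y) = ee (lact r x y) + tw (Lq h (lact r x y)) (ee (ract r x y))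
  rw [tw_ee, tw_ee]
  simp only [Lq_apply, inv1 h]
  abel

lemma movePN (x b : X) :
    gp h x * (gp h b)⁻¹
      = (gp h ((Rq h x).symm b))⁻¹ * gp h (lact r ((Rq h x).symm b) x) := by
  set u := (Rq h x).symm b with hu
  have key : gp h u * gp h x = gp h (lact r u x) * gp h b := by
    rw [movePP h u x, Rq_symm h]
  calc gp h x * (gp h b)⁻¹
      = (gp h u)⁻¹ * (gp h u * gp h x) * (gp h b)⁻¹ := by group
    _ = (gp h u)⁻¹ * (gp h (lact r u x) * gp h b) * (gp h b)⁻¹ := by rw [key]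
    _ = (gp h u)⁻¹ * gp h (lact r u x) := by group


/-- Evaluation of a signed word. -/
noncomputable def gam : X × Bool → Wr X := fun a => if a.2 then gp h a.1 else (gp h a.1)⁻¹

noncomputable def evw (w : List (X × Bool)) : Wr X := (w.map (gam h)).prod
noncomputable def evP (P : List X) : Wr X := (P.map (gp h)).prod
noncomputable def evN (N : List X) : Wr X := (N.map (fun z => (gp h z)⁻¹)).prod

@[simp] lemma evw_nil : evw h ([] : List (X × Bool)) = 1 := rfl
@[simp] lemma evP_nil : evP h ([] : List X) = 1 := rfl
@[simp] lemma evN_nil : evN h ([] : List X) = 1 := rfl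

lemma evw_cons (a : X × Bool) (w : List (X × Bool)) :
    evw h (a :: w) = gam h a * evw h w := by simp [evw]
lemma evP_cons (z : X) (P : List X) : evP h (z :: P) = gp h z * evP h P := by simp [evP]
lemma evN_cons (z : X) (N : List X) : evN h (z :: N) = (gp h z)⁻¹ * evN h N := by simp [evN]

lemma evw_append (w₁ w₂ : List (X × Bool)) :
    evw h (w₁ ++ w₂) = evw h w₁ * evw h w₂ := by simp [evw]
lemma evP_append (P₁ P₂ : List X) :
    evP h (P₁ ++ P₂) = evP h P₁ * evP h P₂ := by simp [evP]

/-- The inverse word. -/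
def invw (w : List (X × Bool)) : List (X × Bool) := (w.map (fun a => (a.1, !a.2))).reverse

lemma gam_flip (a : X × Bool) : gam h (a.1, !a.2) = (gam h a)⁻¹ := by
  rcases a with ⟨z, b⟩
  cases b <;> simp [gam]

lemma evw_invw (w : List (X × Bool)) : evw h (invw w) = (evw h w)⁻¹ := by
  rw [evw, invw, List.map_reverse, List.map_map]
  rw [show (evw h w)⁻¹ = ((w.map (gam h)).prod)⁻¹ from rfl, List.prod_inv_reverse,
    List.map_map]
  congr 2
  apply List.map_congr_left
  intro a _
  exact gam_flip h a

/-- Push one positive letter through a negative word. -/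
noncomputable def push : X → List X → List X × X
  | x, [] => ([], x)
  | x, b :: N =>
      let u := (Rq h x).symm b
      let q := push (lact r u x) N
      (u :: q.1, q.2)

lemma push_eval : ∀ (N : List X) (x : X),
    evN h (push h x N).1 * gp h (push h x N).2 = gp h x * evN h N := by
  intro N
  induction N with
  | nil => intro x; simp [push]
  | cons b N ih =>
      intro x
      show evN h ((Rq h x).symm b :: (push h (lact r ((Rq h x).symm b) x) N).1) *
        gp h (push h (lact r ((Rq h x).symm b) x) N).2 = _
      rw [evN_cons, mul_assoc, ih, evN_cons, ← mul_assoc, ← movePN h, mul_assoc]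

/-- Normal form: all negative letters first, then all positive letters. -/
noncomputable def normw : List (X × Bool) → List X × List X
  | [] => ([], [])
  | (z, false) :: w => ((z :: (normw w).1), (normw w).2)
  | (z, true) :: w =>
      let q := normw w
      let q2 := push h z q.1
      (q2.1, q2.2 :: q.2)

lemma normw_eval : ∀ w : List (X × Bool),
    evN h (normw h w).1 * evP h (normw h w).2 = evw h w := by
  intro w
  induction w with
  | nil => simp [normw]
  | cons a w ih =>
      rcases a with ⟨z, b⟩
      cases b
      · show evN h (z :: (normw h w).1) * evP h (normw h w).2 = _
        rw [evN_cons, evw_cons, mul_assoc, ih]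
        rfl
      · show evN h (push h z (normw h w).1).1 *
          evP h ((push h z (normw h w).1).2 :: (normw h w).2) = _
        rw [evP_cons, ← mul_assoc, push_eval h, evw_cons, mul_assoc, ih]
        rfl

lemma revN_eval : ∀ N : List X, evP h N.reverse * evN h N = 1 := by
  intro N
  induction N with
  | nil => simp
  | cons b N ih =>
      rw [List.reverse_cons, evP_append, evN_cons]
      calc evP h N.reverse * evP h [b] * ((gp h b)⁻¹ * evN h N)
          = evP h N.reverse * (evP h [b] * (gp h b)⁻¹) * evN h N := by group
        _ = evP h N.reverse * evN h N := by
              have : evP h [b] = gp h b := by simp [evP]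
              rw [this]; group
        _ = 1 := ih

lemma evP_nonneg : ∀ (P : List X) (t : X), 0 ≤ (evP h P).v t := by
  intro P
  induction P with
  | nil => intro t; simp
  | cons a P ih =>
      intro t
      rw [evP_cons]
      show 0 ≤ (ee a + tw (Lq h a) (evP h P).v) t
      have h1 : 0 ≤ ee a t := by simp [ee]; split <;> norm_num
      have h2 : 0 ≤ tw (Lq h a) (evP h P).v t := ih _
      have := add_nonneg h1 h2
      simpa using this

lemma evP_head_pos (a : X) (P : List X) : 1 ≤ (evP h (a :: P)).v a := by
  rw [evP_cons]
  show 1 ≤ (ee a + tw (Lq h a) (evP h P).v) a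
  have h2 : 0 ≤ tw (Lq h a) (evP h P).v a := evP_nonneg h P _
  have : (ee a + tw (Lq h a) (evP h P).v) a = 1 + tw (Lq h a) (evP h P).v a := by
    simp [ee]
  omega

lemma front_lemma : ∀ (P : List X) (z : X), (evP h P).v z ≠ 0 →
    ∃ Q : List X, evP h (z :: Q) = evP h P ∧ (z :: Q).length = P.length := by
  intro P
  induction P with
  | nil => intro z hz; exact absurd rfl hz
  | cons a P ih =>
      intro z hz
      by_cases haz : z = a
      · subst haz; exact ⟨P, rfl, rfl⟩
      · have hz' : (evP h P).v ((Lq h a).symm z) ≠ 0 := by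
          intro hc
          apply hz
          rw [evP_cons]
          show (ee a + tw (Lq h a) (evP h P).v) z = 0
          simp [ee, haz, tw_apply, hc]
        obtain ⟨Q', hQ', hlen⟩ := ih _ hz'
        refine ⟨ract r a ((Lq h a).symm z) :: Q', ?_, ?_⟩
        · have h1 : evP h (a :: (Lq h a).symm z :: Q') = evP h (a :: P) := by
            rw [evP_cons, hQ', evP_cons]
          have hz2 : lact r a ((Lq h a).symm z) = z := Equiv.apply_symm_apply (Lq h a) z
          rw [← h1, evP_cons, evP_cons, evP_cons, evP_cons, ← mul_assoc, ← mul_assoc]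
          congr 1
          rw [movePP h a ((Lq h a).symm z), hz2]
        · simpa using by simpa using hlen

lemma thmM : ∀ (n : ℕ) (P₁ P₂ : List X), P₁.length = n →
    (evP h P₁).v = (evP h P₂).v → (evP h P₁).p = (evP h P₂).p := by
  intro n
  induction n with
  | zero =>
      intro P₁ P₂ h1 h2
      rw [List.length_eq_zero_iff] at h1
      subst h1
      cases P₂ with
      | nil => rfl
      | cons b Q =>
          exfalso
          have := evP_head_pos h b Q
          rw [← h2] at this
          simp at this
  | succ n ih =>
      intro P₁ P₂ h1 h2
      cases P₁ with
      | nil => simp at h1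
      | cons a P =>
          have ha : (evP h P₂).v a ≠ 0 := by
            rw [← h2]
            have := evP_head_pos h a P
            omega
          obtain ⟨Q, hQ, _⟩ := front_lemma h P₂ a ha
          have h2' : (evP h (a :: P)).v = (evP h (a :: Q)).v := by rw [h2, hQ]
          have hv : (evP h P).v = (evP h Q).v := by
            rw [evP_cons, evP_cons] at h2'
            have := congrArg (tw (Lq h a)⁻¹) (by
              have e1 : tw (Lq h a) (evP h P).v = tw (Lq h a) (evP h Q).v := by
                have : ee a + tw (Lq h a) (evP h P).v = ee a + tw (Lq h a) (evP h Q).v := h2'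
                exact add_left_cancel this
              exact e1)
            rwa [tw_tw_inv, tw_tw_inv] at this
          have hp := ih P Q (by simpa using h1) hv
          rw [← hQ, evP_cons, evP_cons]
          simp [hp]

/-- Key freeness statement: a word with trivial vector part has trivial permutation part. -/
lemma claimF (w : List (X × Bool)) (hv : (evw h w).v = 0) : (evw h w).p = 1 := by
  have hnorm := normw_eval h w
  have hrev := revN_eval h (normw h w).1
  have hPrev : evP h ((normw h w).1).reverse = (evN h (normw h w).1)⁻¹ :=
    eq_inv_of_mul_eq_one_left hrev
  have hP : evP h (normw h w).2 = evP h ((normw h w).1).reverse * evw h w := by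
    rw [hPrev, ← hnorm]; group
  have hveq : (evP h (normw h w).2).v = (evP h ((normw h w).1).reverse).v := by
    rw [hP]
    show (evP h ((normw h w).1).reverse).v + tw _ (evw h w).v = _
    rw [hv, tw_zero, add_zero]
  have hpeq := thmM h _ _ _ rfl hveq
  have : (evP h (normw h w).2).p = (evP h ((normw h w).1).reverse).p * (evw h w).p := by
    rw [hP]; rfl
  rw [hpeq] at this
  exact mul_left_cancel (by rw [← this, mul_one])


lemma realize : ∀ g ∈ Gcal r, ∃ w : List (X × Bool), (evw h w).p = g := by
  intro g hg
  induction hg using Subgroup.closure_induction with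
  | mem σ hσ =>
      obtain ⟨x, hx⟩ := hσ
      refine ⟨[(x, true)], ?_⟩
      have : σ = Lq h x := Equiv.ext fun y => hx y
      rw [this, evw_cons]
      show (gp h x * 1).p = Lq h x
      simp [gam]
  | one => exact ⟨[], rfl⟩
  | mul x y _ _ hx hy =>
      obtain ⟨w₁, hw₁⟩ := hx
      obtain ⟨w₂, hw₂⟩ := hy
      exact ⟨w₁ ++ w₂, by rw [evw_append]; simp [hw₁, hw₂]⟩
  | inv x _ hx =>
      obtain ⟨w, hw⟩ := hx
      exact ⟨invw w, by rw [evw_invw]; simp [hw]⟩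

/-- Vectors of words acting trivially. -/
def Vset : Set (X → ℤ) := {m | ∃ w : List (X × Bool), (evw h w).p = 1 ∧ (evw h w).v = m}

lemma V_zero : (0 : X → ℤ) ∈ Vset h := ⟨[], rfl, rfl⟩

lemma V_add {m₁ m₂ : X → ℤ} (h₁ : m₁ ∈ Vset h) (h₂ : m₂ ∈ Vset h) : m₁ + m₂ ∈ Vset h := by
  obtain ⟨w₁, hp₁, hv₁⟩ := h₁
  obtain ⟨w₂, hp₂, hv₂⟩ := h₂
  refine ⟨w₁ ++ w₂, ?_, ?_⟩
  · rw [evw_append]; simp [hp₁, hp₂]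
  · rw [evw_append]; simp [hp₁, hv₁, hv₂, tw_one]

lemma V_neg {m : X → ℤ} (h₁ : m ∈ Vset h) : -m ∈ Vset h := by
  obtain ⟨w, hp, hv⟩ := h₁
  refine ⟨invw w, ?_, ?_⟩
  · rw [evw_invw]; simp [hp]
  · rw [evw_invw]
    show -(tw (evw h w).p⁻¹ (evw h w).v) = -m
    rw [hp, hv]
    simp [tw_one]

lemma V_sub {m₁ m₂ : X → ℤ} (h₁ : m₁ ∈ Vset h) (h₂ : m₂ ∈ Vset h) : m₁ - m₂ ∈ Vset h := by
  have := V_add h h₁ (V_neg h h₂)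
  simpa [sub_eq_add_neg] using this

lemma V_conj {m : X → ℤ} (g : Equiv.Perm X) (hg : g ∈ Gcal r) (hm : m ∈ Vset h) :
    tw g m ∈ Vset h := by
  obtain ⟨wg, hwg⟩ := realize h g hg
  obtain ⟨k, hkp, hkv⟩ := hm
  refine ⟨wg ++ (k ++ invw wg), ?_, ?_⟩
  · rw [evw_append, evw_append, evw_invw]
    simp [hkp, hwg]
  · rw [evw_append, evw_append, evw_invw]
    show (evw h wg).v + tw (evw h wg).p ((evw h k).v +
      tw (evw h k).p (-(tw (evw h wg).p⁻¹ (evw h wg).v))) = tw g m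
    rw [hkp, hkv, tw_one, tw_add, tw_neg, tw_inv_tw, hwg]
    abel

lemma autConj (σ : Equiv.Perm X) (hσ : IsAutPerm r σ) (z : X) :
    σ * Lq h z * σ⁻¹ = Lq h (σ z) := by
  ext t
  have h1 := congrArg Prod.fst (hσ (z, σ⁻¹ t))
  simp only [Prod.fst] at h1
  show σ (Lq h z (σ⁻¹ t)) = Lq h (σ z) t
  calc σ (Lq h z (σ⁻¹ t)) = σ ((r (z, σ⁻¹ t)).1) := rfl
    _ = (r (σ z, σ (σ⁻¹ t))).1 := h1.symm
    _ = (r (σ z, t)).1 := by rw [show σ (σ⁻¹ t) = t from Equiv.apply_symm_apply σ t]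
    _ = Lq h (σ z) t := rfl

lemma autV (σ : Equiv.Perm X) (hσ : IsAutPerm r σ) (w : List (X × Bool))
    (hw : (evw h w).p = σ) :
    ∀ g ∈ Gcal r, ((evw h w).v - tw g ((evw h w).v)) ∈ Vset h := by
  set a := (evw h w).v with ha
  have base : ∀ u : X, a - tw (Lq h u) a ∈ Vset h := by
    intro u
    set z := σ⁻¹ u with hz
    have hσz : σ z = u := Equiv.apply_symm_apply σ u
    refine ⟨w ++ ((z, true) :: (invw w ++ [(u, false)])), ?_, ?_⟩
    · rw [evw_append, evw_cons, evw_append, evw_invw]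
      show ((evw h w) * (gam h (z, true) * ((evw h w)⁻¹ * evw h [(u, false)]))).p = 1
      have hgam : gam h (z, true) = gp h z := rfl
      have hgu : evw h [(u, false)] = (gp h u)⁻¹ := by
        show gam h (u, false) * 1 = (gp h u)⁻¹
        simp [gam]
      rw [hgam, hgu]
      show (evw h w).p * ((gp h z).p * ((evw h w).p⁻¹ * ((gp h u)⁻¹).p)) = 1
      simp only [gp_p, Wr.inv_p, hw]
      have hconj := autConj h σ hσ z
      rw [hσz] at hconj
      calc σ * (Lq h z * (σ⁻¹ * (Lq h u)⁻¹))
          = (σ * Lq h z * σ⁻¹) * (Lq h u)⁻¹ := by group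
        _ = Lq h u * (Lq h u)⁻¹ := by rw [hconj]
        _ = 1 := by group
    · rw [evw_append, evw_cons, evw_append, evw_invw]
      have hgam : gam h (z, true) = gp h z := rfl
      have hgu : evw h [(u, false)] = (gp h u)⁻¹ := by
        show gam h (u, false) * 1 = (gp h u)⁻¹
        simp [gam]
      rw [hgam, hgu]
      have hconj := autConj h σ hσ z
      rw [hσz] at hconj
      show a + tw (evw h w).p ((ee z) + tw (Lq h z)
        ((-(tw (evw h w).p⁻¹ a)) + tw (evw h w).p⁻¹ (-(tw (Lq h u)⁻¹ (ee u)))))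
        = a - tw (Lq h u) a
      rw [hw]
      have e1 : tw σ (ee z) = ee u := by rw [tw_ee, hσz]
      have e2 : σ * (Lq h z * σ⁻¹) = Lq h u := by rw [← hconj]; group
      have e3 : σ * (Lq h z * (σ⁻¹ * (Lq h u)⁻¹)) = 1 := by
        rw [show σ * (Lq h z * (σ⁻¹ * (Lq h u)⁻¹)) = (σ * Lq h z * σ⁻¹) * (Lq h u)⁻¹ by group,
          hconj]
        group
      simp only [tw_add, tw_neg, ← tw_mul]
      rw [e1, e2, e3, tw_one]
      abel
  intro g hg
  have main : ∀ g ∈ Gcal r, (a - tw g a ∈ Vset h) ∧ (a - tw g⁻¹ a ∈ Vset h) := by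
    intro g hg
    induction hg using Subgroup.closure_induction with
    | mem σ' hσ' =>
        obtain ⟨x, hx⟩ := hσ'
        have hs : σ' = Lq h x := Equiv.ext fun y => hx y
        subst hs
        constructor
        · exact base x
        · have h1 := V_conj h (Lq h x)⁻¹
            (inv_mem (Subgroup.subset_closure ⟨x, fun y => rfl⟩)) (base x)
          have h2 : tw (Lq h x)⁻¹ (a - tw (Lq h x) a) = tw (Lq h x)⁻¹ a - a := by
            show tw (Lq h x)⁻¹ (a + -(tw (Lq h x) a)) = _
            rw [tw_add, tw_neg, tw_tw_inv]
            abel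
          rw [h2] at h1
          have := V_neg h h1
          simpa using this
    | one => constructor <;> simp [tw_one, V_zero h]
    | mul x y hxm hym hx hy =>
        constructor
        · have : a - tw (x * y) a = (a - tw x a) + tw x (a - tw y a) := by
            rw [tw_mul]
            show _ = (a + -(tw x a)) + tw x (a + -(tw y a))
            rw [tw_add, tw_neg]
            abel
          rw [this]
          exact V_add h hx.1 (V_conj h x hxm hy.1)
        · have : a - tw (x * y)⁻¹ a = (a - tw y⁻¹ a) + tw y⁻¹ (a - tw x⁻¹ a) := by
            rw [mul_inv_rev, tw_mul]
            show _ = (a + -(tw y⁻¹ a)) + tw y⁻¹ (a + -(tw x⁻¹ a))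
            rw [tw_add, tw_neg]
            abel
          rw [this]
          exact V_add h hy.2 (V_conj h y⁻¹ (inv_mem hym) hx.2)
    | inv x hxm hx =>
        refine ⟨hx.2, ?_⟩
        simpa using hx.1
  exact (main g hg).1

lemma part1 (x y : X) (hx : IsAutPt r x) (hy : IsAutPt r y) (z : X) :
    lact r x (lact r y z) = lact r y (lact r x z) := by
  obtain ⟨a, ha⟩ := (h.nondegL x).surjective y
  have ha' : lact r x a = y := ha
  have hLc : ∀ b, lact r (ract r x a) b = lact r x b := by
    intro b
    have h1 := ybeL h x a b
    have h2 := hx a b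
    have h3 : lact r (lact r x a) (lact r (ract r x a) b)
        = lact r (lact r x a) (lact r x b) := by rw [h1, h2]
    exact (h.nondegL (lact r x a)).injective h3
  have hyc : lact r y (ract r x a) = x := by
    have := inv1 h x a
    rwa [ha'] at this
  have h4 := hy (ract r x a) z
  rw [hLc z, hyc] at h4
  exact h4.symm

lemma part2 (σ τ : Equiv.Perm X) (hσ : IsAutPerm r σ) (hσG : σ ∈ Gcal r)
    (hτ : IsAutPerm r τ) (hτG : τ ∈ Gcal r) : σ * τ = τ * σ := by
  obtain ⟨wσ, hwσ⟩ := realize h σ hσG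
  obtain ⟨wτ, hwτ⟩ := realize h τ hτG
  set a := (evw h wσ).v with ha
  set b := (evw h wτ).v with hb
  set c := σ * τ * σ⁻¹ * τ⁻¹ with hc
  set wc := wσ ++ (wτ ++ (invw wσ ++ invw wτ)) with hwc
  have hevc : evw h wc = evw h wσ * (evw h wτ * ((evw h wσ)⁻¹ * (evw h wτ)⁻¹)) := by
    rw [hwc, evw_append, evw_append, evw_append, evw_invw, evw_invw]
  have hcp : (evw h wc).p = c := by
    rw [hevc]
    show (evw h wσ).p * ((evw h wτ).p * ((evw h wσ).p⁻¹ * (evw h wτ).p⁻¹)) = c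
    rw [hwσ, hwτ, hc]
    group
  have hcv : (evw h wc).v
      = a + tw σ b - tw (σ * τ * σ⁻¹) a - tw (σ * τ * σ⁻¹ * τ⁻¹) b := by
    rw [hevc]
    show a + tw (evw h wσ).p (b + tw (evw h wτ).p
      ((-(tw (evw h wσ).p⁻¹ a)) + tw (evw h wσ).p⁻¹ (-(tw (evw h wτ).p⁻¹ b)))) = _
    rw [hwσ, hwτ]
    have r1 : σ * (τ * σ⁻¹) = σ * τ * σ⁻¹ := by group
    have r2 : σ * (τ * (σ⁻¹ * τ⁻¹)) = σ * τ * σ⁻¹ * τ⁻¹ := by group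
    simp only [tw_add, tw_neg, ← tw_mul]
    rw [r1, r2]
    abel
  have hmem : (evw h wc).v ∈ Vset h := by
    rw [hcv]
    have m1 : a - tw (σ * τ * σ⁻¹) a ∈ Vset h :=
      autV h σ hσ wσ hwσ _ (mul_mem (mul_mem hσG hτG) (inv_mem hσG))
    have m2 : b - tw c b ∈ Vset h :=
      autV h τ hτ wτ hwτ c
        (mul_mem (mul_mem (mul_mem hσG hτG) (inv_mem hσG)) (inv_mem hτG))
    have m3 : b - tw σ b ∈ Vset h := autV h τ hτ wτ hwτ σ hσG
    have : a + tw σ b - tw (σ * τ * σ⁻¹) a - tw (σ * τ * σ⁻¹ * τ⁻¹) b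
        = (a - tw (σ * τ * σ⁻¹) a) + ((b - tw c b) - (b - tw σ b)) := by
      rw [hc]; abel
    rw [this]
    exact V_add h m1 (V_sub h m2 m3)
  obtain ⟨k, hkp, hkv⟩ := hmem
  have hzero : (evw h (invw k ++ wc)).v = 0 := by
    rw [evw_append, evw_invw]
    show -(tw (evw h k).p⁻¹ (evw h k).v) + tw (evw h k).p⁻¹ (evw h wc).v = 0
    rw [hkp, hkv]
    abel
  have hone := claimF h (invw k ++ wc) hzero
  rw [evw_append, evw_invw] at hone
  have : (evw h k).p⁻¹ * (evw h wc).p = 1 := hone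
  rw [hkp, hcp] at this
  have hc1 : c = 1 := by simpa using this
  calc σ * τ = (σ * τ * σ⁻¹ * τ⁻¹) * (τ * σ) := by group
    _ = 1 * (τ * σ) := by rw [← hc, hc1]
    _ = τ * σ := one_mul _


end Aux

/-- if `L_x, L_y` are automorphisms then they commute; consequently
`Aut(X,r) ∩ 𝒢(X,r)` is abelian. -/
theorem stmt3 {X : Type*} (r : X × X → X × X) (h : IsSquareFreeSolution r) :
    (∀ x y : X, IsAutPt r x → IsAutPt r y →
        ∀ z : X, lact r x (lact r y z) = lact r y (lact r x z)) ∧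
    (∀ σ τ : Equiv.Perm X, IsAutPerm r σ → σ ∈ Gcal r → IsAutPerm r τ → τ ∈ Gcal r →
        σ * τ = τ * σ) := by
  constructor
  · intro x y hx hy z
    exact part1 h x y hx hy z
  · intro σ τ hσ hσG hτ hτG
    exact part2 h σ τ hσ hσG hτ hτG

end YBPaper
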